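/- arXiv:1309.5314 — 3 statements merged into one kernel-verified Lean document; each statement's English description precedes it below -/
import Mathlib

section
/- The map sending a to (1,0) and t to (0,1) extends to a group isomorphism from the presented group BS(1,2) = ⟨a,t | t·a·t⁻¹ = a²⟩ onto the semidirect product ℤ[1/2] ⋊ ℤ. -/
/-- The ring of dyadic rationals `ℤ[1/2]`, as a subring of `ℚ`. -/
def DyadicQ : Subring ℚ := Subring.closure {(2:ℚ)⁻¹}

lemma DyadicQ.two_mem : (2:ℚ) ∈ DyadicQ := by
  have := add_mem (Subring.one_mem DyadicQ) (Subring.one_mem DyadicQ)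
  rw [show (1:ℚ) + 1 = 2 by norm_num] at this
  exact this

lemma DyadicQ.half_mem : (2:ℚ)⁻¹ ∈ DyadicQ := Subring.subset_closure rfl

/-- `2` as a unit of `ℤ[1/2]`. -/
def DyadicQ.two : DyadicQˣ where
  val := ⟨2, DyadicQ.two_mem⟩
  inv := ⟨(2:ℚ)⁻¹, DyadicQ.half_mem⟩
  val_inv := by ext; norm_num
  inv_val := by ext; norm_num

/-- The powers `2^m` for `m : ℤ`, as elements of `ℤ[1/2]`. -/
def pow2 (m : ℤ) : DyadicQ := ((DyadicQ.two ^ m : DyadicQˣ) : DyadicQ)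

lemma pow2_add (m q : ℤ) : pow2 (m + q) = pow2 m * pow2 q := by
  simp [pow2, zpow_add]

lemma pow2_zero : pow2 0 = 1 := by simp [pow2]

/-- The group `H = ℤ[1/2] ⋊ ℤ`, where `ℤ` acts by powers of `2`;
multiplication is `(r,m)·(s,q) = (r + 2^m·s, m+q)`. -/
@[ext] structure Hgrp where
  r : DyadicQ
  m : ℤ

instance : Mul Hgrp := ⟨fun x y => ⟨x.r + pow2 x.m * y.r, x.m + y.m⟩⟩
instance : One Hgrp := ⟨⟨0, 0⟩⟩
instance : Inv Hgrp := ⟨fun x => ⟨-(pow2 (-x.m) * x.r), -x.m⟩⟩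

lemma Hgrp.mul_def (x y : Hgrp) : x * y = ⟨x.r + pow2 x.m * y.r, x.m + y.m⟩ := rfl
lemma Hgrp.one_def : (1 : Hgrp) = ⟨0, 0⟩ := rfl
lemma Hgrp.inv_def (x : Hgrp) : x⁻¹ = ⟨-(pow2 (-x.m) * x.r), -x.m⟩ := rfl

instance : Group Hgrp where
  mul_assoc a b c := by
    simp only [Hgrp.mul_def, Hgrp.mk.injEq, pow2_add]
    constructor <;> ring
  one_mul a := by
    obtain ⟨r, m⟩ := a
    simp only [Hgrp.one_def, Hgrp.mul_def, Hgrp.mk.injEq, pow2_zero]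
    constructor <;> ring
  mul_one a := by
    obtain ⟨r, m⟩ := a
    simp only [Hgrp.one_def, Hgrp.mul_def, Hgrp.mk.injEq, pow2_zero]
    constructor <;> ring
  inv_mul_cancel a := by
    simp only [Hgrp.inv_def, Hgrp.mul_def, Hgrp.one_def, Hgrp.mk.injEq]
    constructor <;> ring

/-- Conjugacy in `H`. -/
def conjH (x y : Hgrp) : Prop := ∃ z : Hgrp, z * x * z⁻¹ = y

/-- The element `a = (1,0)` of `H`. -/
def aH : Hgrp := ⟨1, 0⟩
/-- The element `t = (0,1)` of `H`. -/
def tH : Hgrp := ⟨0, 1⟩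
lemma aH_zpow (n : ℤ) : aH ^ n = Hgrp.mk (n : DyadicQ) 0 := by
  induction n using Int.induction_on with
  | zero => simp [Hgrp.one_def]
  | succ k ih =>
      rw [zpow_add_one, ih]
      simp only [aH, Hgrp.mul_def, Hgrp.mk.injEq, pow2_zero]
      push_cast
      constructor <;> first | ring | (ext; push_cast; ring) | simp
  | pred k ih =>
      rw [zpow_sub_one, ih]
      simp only [aH, Hgrp.inv_def, Hgrp.mul_def, Hgrp.mk.injEq, pow2_zero, neg_zero]
      push_cast
      constructor <;> first | ring | (ext; push_cast; ring) | simp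

lemma tH_zpow (n : ℤ) : tH ^ n = Hgrp.mk 0 n := by
  induction n using Int.induction_on with
  | zero => simp [Hgrp.one_def]
  | succ k ih =>
      rw [zpow_add_one, ih]
      simp [tH, Hgrp.mul_def]
  | pred k ih =>
      rw [zpow_sub_one, ih]
      simp only [tH, Hgrp.inv_def, Hgrp.mul_def, Hgrp.mk.injEq]
      constructor <;> ring

lemma aH_zpow_injective : Function.Injective fun n : ℤ => aH ^ n := by
  intro x y h
  simp only [aH_zpow, Hgrp.mk.injEq] at h
  have : ((x : DyadicQ) : ℚ) = ((y : DyadicQ) : ℚ) := by rw [h.1]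
  simpa using this

lemma tH_zpow_injective : Function.Injective fun n : ℤ => tH ^ n := by
  intro x y h
  simp only [tH_zpow, Hgrp.mk.injEq] at h
  exact h.2

/-- The homomorphism `ℤ →* G` given by powers of `g`. -/
def zintHom {G : Type*} [Group G] (g : G) : Multiplicative ℤ →* G where
  toFun n := g ^ (Multiplicative.toAdd n)
  map_one' := by simp
  map_mul' x y := by simp [zpow_add]

/-- For `g` with `n ↦ g ^ n` injective, `⟨g⟩ ≅ ℤ`. -/
noncomputable def zpowMulEquiv {G : Type*} [Group G] (g : G)
    (hg : Function.Injective fun n : ℤ => g ^ n) :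
    Multiplicative ℤ ≃* Subgroup.zpowers g := by
  refine MulEquiv.ofBijective
    ((zintHom g).codRestrict (Subgroup.zpowers g).toSubmonoid
      (fun n => Subgroup.mem_zpowers_iff.mpr ⟨Multiplicative.toAdd n, rfl⟩)) ⟨?_, ?_⟩
  · intro x y h
    have : g ^ (Multiplicative.toAdd x) = g ^ (Multiplicative.toAdd y) :=
      congrArg Subtype.val h
    exact hg this
  · rintro ⟨x, hx⟩
    obtain ⟨n, hn⟩ := Subgroup.mem_zpowers_iff.mp hx
    exact ⟨Multiplicative.ofAdd n, Subtype.ext hn⟩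

/-- The associated isomorphism `⟨a⟩ ≅ ⟨t⟩`, `a ↦ t`, of the HNN extension defining
the Baumslag group. -/
noncomputable def φBS : Subgroup.zpowers aH ≃* Subgroup.zpowers tH :=
  (zpowMulEquiv aH aH_zpow_injective).symm.trans (zpowMulEquiv tH tH_zpow_injective)

/-- The Baumslag group `G(1,2)`, as HNN extension of `H = BS(1,2)` with stable letter `b`,
associated subgroups `⟨a⟩` and `⟨t⟩`, and associated isomorphism `a ↦ t`. -/
noncomputable abbrev BG := HNNExtension Hgrp (Subgroup.zpowers aH) (Subgroup.zpowers tH) φBS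

/-- The embedding of `H` into the Baumslag group. -/
noncomputable def ι : Hgrp →* BG := HNNExtension.of

/-- The stable letter `b` of the Baumslag group. -/
noncomputable def bBG : BG := HNNExtension.t

/-- Conjugacy in the Baumslag group `G(1,2)`. -/
def conjBG (x y : BG) : Prop := ∃ z : BG, z * x * z⁻¹ = y

/-- Generators of the Baumslag–Solitar group `BS(1,2)`. -/
inductive BSGen | a | t

/-- The single relator `t·a·t⁻¹·a⁻²` of `BS(1,2) = ⟨a,t | t·a·t⁻¹ = a²⟩`. -/
def bsRels : Set (FreeGroup BSGen) :=
  {FreeGroup.of BSGen.t * FreeGroup.of BSGen.a * (FreeGroup.of BSGen.t)⁻¹ *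
    (FreeGroup.of BSGen.a * FreeGroup.of BSGen.a)⁻¹}

namespace BSProof

lemma pow2_coe (m : ℤ) : ((pow2 m : DyadicQ) : ℚ) = 2 ^ m := by
  induction m using Int.induction_on with
  | zero => simp [pow2_zero]
  | succ k ih =>
      rw [pow2_add, zpow_add₀ (two_ne_zero)]
      push_cast
      rw [ih]
      congr 1
  | pred k ih =>
      rw [show (-(k:ℤ) - 1) = (-k) + (-1) by ring, pow2_add, zpow_add₀ (two_ne_zero : (2:ℚ) ≠ 0)]
      push_cast
      rw [ih]
      congr 1
      show ((DyadicQ.two ^ (-1:ℤ) : DyadicQˣ) : DyadicQ).val = (2:ℚ) ^ (-1:ℤ)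
      simp [DyadicQ.two]

/-- The subring of rationals of the form `p / 2^q`. -/
def Srep : Subring ℚ where
  carrier := {x | ∃ (p : ℤ) (q : ℕ), x = p / 2 ^ q}
  zero_mem' := ⟨0, 0, by norm_num⟩
  one_mem' := ⟨1, 0, by norm_num⟩
  add_mem' := by
    rintro _ _ ⟨p, q, rfl⟩ ⟨p', q', rfl⟩
    refine ⟨p * 2 ^ q' + p' * 2 ^ q, q + q', ?_⟩
    push_cast
    rw [pow_add]
    field_simp
  mul_mem' := by
    rintro _ _ ⟨p, q, rfl⟩ ⟨p', q', rfl⟩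
    refine ⟨p * p', q + q', ?_⟩
    push_cast
    rw [pow_add]
    field_simp
  neg_mem' := by
    rintro _ ⟨p, q, rfl⟩
    exact ⟨-p, q, by push_cast; ring⟩

lemma exists_rep (x : DyadicQ) : ∃ p q : ℤ, (x : ℚ) = p * 2 ^ (-q) := by
  have hx : (x : ℚ) ∈ Srep := by
    refine Subring.closure_le.mpr ?_ x.2
    rintro y hy
    rw [Set.mem_singleton_iff] at hy
    subst hy
    exact ⟨1, 1, by norm_num⟩
  obtain ⟨p, q, hpq⟩ := hx
  exact ⟨p, q, by rw [hpq, zpow_neg, zpow_natCast]; ring⟩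

/-- The presented group `BS(1,2)`. -/
abbrev Gp := PresentedGroup bsRels

def A : Gp := PresentedGroup.of BSGen.a
def T : Gp := PresentedGroup.of BSGen.t

lemma rel_holds : T * A * T⁻¹ = A * A := by
  have h : (QuotientGroup.mk (FreeGroup.of BSGen.t * FreeGroup.of BSGen.a *
      (FreeGroup.of BSGen.t)⁻¹ * (FreeGroup.of BSGen.a * FreeGroup.of BSGen.a)⁻¹) :
      PresentedGroup bsRels) = 1 := by
    rw [QuotientGroup.eq_one_iff]
    exact Subgroup.subset_normalClosure rfl
  have h2 : T * A * T⁻¹ * (A * A)⁻¹ = 1 := by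
    exact h
  exact mul_inv_eq_one.mp h2

lemma conjT (n : ℤ) : T * A ^ n * T⁻¹ = A ^ (2 * n) := by
  have : (T * A * T⁻¹) ^ n = T * A ^ n * T⁻¹ := conj_zpow
  rw [← this, rel_holds]
  rw [show A * A = A ^ (2:ℤ) by rw [zpow_two], ← zpow_mul]

/-- `c p q = T^{-q} A^p T^q`, representing the dyadic `p·2^{-q}`. -/
def c (p q : ℤ) : Gp := T ^ (-q) * A ^ p * T ^ q

lemma c_double (p q : ℤ) : c p q = c (2 * p) (q + 1) := by
  have h : A ^ p = T⁻¹ * A ^ (2 * p) * T := by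
    rw [← conjT p]; group
  unfold c
  rw [h]
  group

lemma c_shift (p q : ℤ) (k : ℕ) : c p q = c (p * 2 ^ k) (q + k) := by
  induction k with
  | zero => simp
  | succ k ih =>
      rw [ih, c_double (p * 2 ^ k) (q + k)]
      congr 1
      · ring
      · push_cast; ring

lemma c_welldef_le {p q p' q' : ℤ} (hle : q ≤ q')
    (h : (p : ℚ) * 2 ^ (-q) = (p' : ℚ) * 2 ^ (-q')) : c p q = c p' q' := by
  set k : ℕ := (q' - q).toNat with hk
  have hk' : (k : ℤ) = q' - q := Int.toNat_of_nonneg (by omega)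
  have hp' : p' = p * 2 ^ k := by
    have h2 : (p' : ℚ) = p * 2 ^ ((q' - q : ℤ)) := by
      have h' : (p : ℚ) * 2 ^ (-q) * 2 ^ (q') = p' * 2 ^ (-q') * 2 ^ (q') := by rw [h]
      rw [mul_assoc, mul_assoc, ← zpow_add₀ (two_ne_zero : (2:ℚ) ≠ 0),
        ← zpow_add₀ (two_ne_zero : (2:ℚ) ≠ 0),
        show -q + q' = q' - q by ring, show -q' + q' = 0 by ring, zpow_zero, mul_one] at h'
      exact h'.symm
    rw [← hk', zpow_natCast] at h2
    exact_mod_cast h2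
  rw [hp', show q' = q + k by omega]
  exact c_shift p q k

lemma c_welldef {p q p' q' : ℤ} (h : (p : ℚ) * 2 ^ (-q) = (p' : ℚ) * 2 ^ (-q')) :
    c p q = c p' q' := by
  rcases le_total q q' with hle | hle
  · exact c_welldef_le hle h
  · exact (c_welldef_le hle h.symm).symm

lemma c_add (p p' q : ℤ) : c p q * c p' q = c (p + p') q := by
  unfold c
  rw [zpow_add A]
  group

lemma c_sum {p q p' q' P Q : ℤ}
    (h : (P : ℚ) * 2 ^ (-Q) = (p : ℚ) * 2 ^ (-q) + (p' : ℚ) * 2 ^ (-q')) :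
    c p q * c p' q' = c P Q := by
  set M : ℤ := max q q' with hM
  have h1 : c p q = c (p * 2 ^ (M - q).toNat) M := by
    rw [c_shift p q (M - q).toNat]
    congr 1
    omega
  have h2 : c p' q' = c (p' * 2 ^ (M - q').toNat) M := by
    rw [c_shift p' q' (M - q').toNat]
    congr 1
    omega
  rw [h1, h2, c_add]
  apply c_welldef
  rw [h]
  have e1 : ((M - q).toNat : ℤ) = M - q := Int.toNat_of_nonneg (by omega)
  have e2 : ((M - q').toNat : ℤ) = M - q' := Int.toNat_of_nonneg (by omega)
  push_cast
  rw [← zpow_natCast (2:ℚ) (M - q).toNat, ← zpow_natCast (2:ℚ) (M - q').toNat, e1, e2,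
    add_mul, mul_assoc, mul_assoc, ← zpow_add₀ (two_ne_zero : (2:ℚ) ≠ 0),
    ← zpow_add₀ (two_ne_zero : (2:ℚ) ≠ 0)]
  ring_nf

lemma T_conj_c (m p q : ℤ) : T ^ m * c p q * T ^ (-m) = c p (q - m) := by
  unfold c
  rw [show -(q - m) = -q + m by ring, show q - m = q + (-m) by ring, zpow_add T, zpow_add T]
  group

/-- The inverse map `H → BS(1,2)`. -/
noncomputable def Ψ (h : Hgrp) : Gp :=
  c (exists_rep h.r).choose (exists_rep h.r).choose_spec.choose * T ^ h.m

lemma Ψ_eq (h : Hgrp) (p q : ℤ) (hpq : (h.r : ℚ) = p * 2 ^ (-q)) :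
    Ψ h = c p q * T ^ h.m := by
  unfold Ψ
  congr 1
  apply c_welldef
  rw [← (exists_rep h.r).choose_spec.choose_spec, hpq]

lemma c_zero_zero : c 0 0 = 1 := by simp [c]

lemma Ψ_one : Ψ 1 = 1 := by
  rw [Ψ_eq 1 0 0 (by simp [Hgrp.one_def]), c_zero_zero]
  simp [Hgrp.one_def]

lemma Ψ_mul (x y : Hgrp) : Ψ (x * y) = Ψ x * Ψ y := by
  obtain ⟨p, q, hpq⟩ := exists_rep x.r
  obtain ⟨p', q', hpq'⟩ := exists_rep y.r
  obtain ⟨P, Q, hPQ⟩ := exists_rep (x * y).r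
  rw [Ψ_eq x p q hpq, Ψ_eq y p' q' hpq', Ψ_eq (x * y) P Q hPQ]
  have hm : (x * y).m = x.m + y.m := rfl
  have key : c p q * c p' (q' - x.m) = c P Q := by
    apply c_sum
    have hr : ((x * y).r : ℚ) = (x.r : ℚ) + (pow2 x.m : ℚ) * (y.r : ℚ) := by
      rw [Hgrp.mul_def]
      push_cast
      ring
    rw [← hPQ, hr, hpq, hpq', pow2_coe,
      show -(q' - x.m) = x.m + (-q') by ring, zpow_add₀ (two_ne_zero : (2:ℚ) ≠ 0)]
    ring
  calc c P Q * T ^ (x * y).m = c p q * c p' (q' - x.m) * T ^ (x.m + y.m) := by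
        rw [key, hm]
    _ = c p q * (T ^ x.m * c p' q' * T ^ (-x.m)) * T ^ (x.m + y.m) := by
        rw [T_conj_c]
    _ = c p q * T ^ x.m * (c p' q' * T ^ y.m) := by
        rw [zpow_add T, zpow_neg]
        group

noncomputable def Ψhom : Hgrp →* Gp where
  toFun := Ψ
  map_one' := Ψ_one
  map_mul' := Ψ_mul

def fGen : BSGen → Hgrp
  | BSGen.a => aH
  | BSGen.t => tH

lemma rels_ker : ∀ r ∈ bsRels, FreeGroup.lift fGen r = 1 := by
  intro r hr
  rw [bsRels, Set.mem_singleton_iff] at hr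
  subst hr
  simp only [map_mul, map_inv, FreeGroup.lift_apply_of, fGen]
  rw [mul_inv_eq_one]
  show tH * aH * tH⁻¹ = aH * aH
  simp only [tH, aH, Hgrp.mul_def, Hgrp.inv_def, Hgrp.mk.injEq]
  constructor
  · ext
    push_cast [pow2_coe]
    norm_num
  · ring

noncomputable def φ : Gp →* Hgrp := PresentedGroup.toGroup rels_ker

lemma φ_A : φ A = aH := PresentedGroup.toGroup.of rels_ker
lemma φ_T : φ T = tH := PresentedGroup.toGroup.of rels_ker

lemma φ_Ψ (h : Hgrp) : φ (Ψ h) = h := by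
  obtain ⟨p, q, hpq⟩ := exists_rep h.r
  rw [Ψ_eq h p q hpq]
  unfold c
  simp only [map_mul, map_zpow, φ_A, φ_T, aH_zpow, tH_zpow]
  obtain ⟨r, m⟩ := h
  simp only at hpq ⊢
  simp only [Hgrp.mul_def, Hgrp.mk.injEq]
  constructor
  · ext
    push_cast [pow2_coe]
    rw [hpq]
    ring
  · ring

lemma Ψ_φ : Ψhom.comp φ = MonoidHom.id Gp := by
  apply QuotientGroup.monoidHom_ext
  apply FreeGroup.ext_hom
  intro g
  show Ψhom (φ (PresentedGroup.of g)) = PresentedGroup.of g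
  cases g with
  | a =>
      rw [show (PresentedGroup.of BSGen.a : Gp) = A from rfl, φ_A]
      show Ψ aH = A
      rw [Ψ_eq aH 1 0 (by simp [aH])]
      simp [c, aH, A]
  | t =>
      rw [show (PresentedGroup.of BSGen.t : Gp) = T from rfl, φ_T]
      show Ψ tH = T
      rw [Ψ_eq tH 0 0 (by simp [tH]), c_zero_zero]
      simp [tH, T]

end BSProof

/-- The map `a ↦ (1,0)`, `t ↦ (0,1)` extends to a group isomorphism from the presented
group `BS(1,2) = ⟨a,t | t·a·t⁻¹ = a²⟩` onto `ℤ[1/2] ⋊ ℤ`. -/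
theorem stmt0 : ∃ e : PresentedGroup bsRels ≃* Hgrp,
    e (PresentedGroup.of BSGen.a) = aH ∧ e (PresentedGroup.of BSGen.t) = tH := by
  have li : Function.LeftInverse BSProof.Ψ ⇑BSProof.φ :=
    fun g => DFunLike.congr_fun BSProof.Ψ_φ g
  exact ⟨{ toFun := ⇑BSProof.φ, invFun := BSProof.Ψ, left_inv := li,
           right_inv := BSProof.φ_Ψ, map_mul' := map_mul BSProof.φ },
         BSProof.φ_A, BSProof.φ_T⟩
end

section
/- Suppose A ≠ H and B ≠ H. Then for every word γ ∈ Σ* and every β ∈ {b, b⁻¹}: ∑_{y ∈ Σ*, η(β·γ·y·β⁻¹) ∉ H} 2·|Δ|^{−|y|−1} ≥ 2/|Δ|², where |y| denotes the length of y. (The weights y ↦ 2·|Δ|^{−|y|−1} form a probability distribution on Σ*.) -/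
open scoped ENNReal

/-- The alphabet `Δ = Σ ⊔ {b, b⁻¹}`: `Sum.inl s` for a letter `s ∈ Σ`, and
`Sum.inr true = b`, `Sum.inr false = b⁻¹`. -/
abbrev HNNAlph {H : Type*} (S : Finset H) := {x // x ∈ S} ⊕ Bool

/-- Evaluation of a single letter of `Δ` in the HNN extension. -/
def hnnLetter {H : Type*} [Group H] {A B : Subgroup H} (φ : A ≃* B) {S : Finset H} :
    HNNAlph S → HNNExtension H A B φ
  | Sum.inl s => HNNExtension.of s.val
  | Sum.inr true => HNNExtension.t
  | Sum.inr false => HNNExtension.t⁻¹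

/-- The evaluation homomorphism `η : Δ* → G` (on words, as lists of letters). -/
def hnnEval {H : Type*} [Group H] {A B : Subgroup H} (φ : A ≃* B) {S : Finset H}
    (w : List (HNNAlph S)) : HNNExtension H A B φ :=
  (w.map (hnnLetter φ)).prod

/-- The image of the base group `H` inside the HNN extension. -/
def hnnBase {H : Type*} [Group H] {A B : Subgroup H} (φ : A ≃* B) :
    Subgroup (HNNExtension H A B φ) :=
  MonoidHom.range HNNExtension.of

open HNNExtension in
lemma britton_t {H : Type*} [Group H] {A B : Subgroup H} (φ : A ≃* B) {g : H} (hg : g ∉ A) :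
    HNNExtension.t * HNNExtension.of g * HNNExtension.t⁻¹ ∉
      (MonoidHom.range HNNExtension.of : Subgroup (HNNExtension H A B φ)) := by
  intro hmem
  let w : HNNExtension.NormalWord.ReducedWord H A B :=
    ⟨1, [(1, g), (-1, 1)], List.isChain_cons_cons.2 ⟨fun h => absurd h hg, List.isChain_singleton _⟩⟩
  have hprod : w.prod φ = HNNExtension.t * HNNExtension.of g * HNNExtension.t⁻¹ := by
    simp [HNNExtension.NormalWord.ReducedWord.prod, w, mul_assoc]
  have := HNNExtension.ReducedWord.toList_eq_nil_of_mem_of_range φ w (by rw [hprod]; exact hmem)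
  simp [w] at this

open HNNExtension in
lemma britton_tinv {H : Type*} [Group H] {A B : Subgroup H} (φ : A ≃* B) {g : H} (hg : g ∉ B) :
    HNNExtension.t⁻¹ * HNNExtension.of g * HNNExtension.t ∉
      (MonoidHom.range HNNExtension.of : Subgroup (HNNExtension H A B φ)) := by
  intro hmem
  let w : HNNExtension.NormalWord.ReducedWord H A B :=
    ⟨1, [(-1, g), (1, 1)], List.isChain_cons_cons.2 ⟨fun h => absurd (by rwa [HNNExtension.toSubgroup_neg_one] at h) hg, List.isChain_singleton _⟩⟩
  have hprod : w.prod φ = HNNExtension.t⁻¹ * HNNExtension.of g * HNNExtension.t := by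
    simp [HNNExtension.NormalWord.ReducedWord.prod, w, mul_assoc]
  have := HNNExtension.ReducedWord.toList_eq_nil_of_mem_of_range φ w (by rw [hprod]; exact hmem)
  simp [w] at this

lemma exists_notmem {H : Type*} [Group H] {S : Finset H}
    (hgen : Subgroup.closure (S : Set H) = ⊤) {A : Subgroup H} (hA : A ≠ ⊤) :
    ∃ s ∈ S, s ∉ A := by
  by_contra h
  push_neg at h
  exact hA (top_le_iff.1 (hgen ▸ (Subgroup.closure_le A).2 h))

lemma key_exists {H : Type*} [Group H] {S : Finset H}
    (hgen : Subgroup.closure (S : Set H) = ⊤) {A : Subgroup H} (hA : A ≠ ⊤)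
    (g : H) : ∃ y : List {x // x ∈ S}, y.length ≤ 1 ∧ g * (y.map Subtype.val).prod ∉ A := by
  obtain ⟨s, hs, hsA⟩ := exists_notmem hgen hA
  by_cases hg : g ∈ A
  · exact ⟨[⟨s, hs⟩], le_refl _, by
      simp only [List.map_cons, List.map_nil, List.prod_cons, List.prod_nil, mul_one]
      intro h
      exact hsA (by simpa using A.mul_mem (A.inv_mem hg) h)⟩
  · exact ⟨[], by simp, by simpa using hg⟩

/-- If `A ≠ H ≠ B`, then for every `γ ∈ Σ*` and `β ∈ {b, b⁻¹}`, a random word `y ∈ Σ*`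
(with weights `2·|Δ|^{-|y|-1}`) satisfies `η(β·γ·y·β⁻¹) ∉ H` with probability at least
`2/|Δ|²`. -/


theorem stmt13 {H : Type*} [Group H] (S : Finset H)
    (hsym : ∀ x ∈ S, x⁻¹ ∈ S) (hgen : Subgroup.closure (S : Set H) = ⊤)
    (A B : Subgroup H) (φ : A ≃* B) (hA : A ≠ ⊤) (hB : B ≠ ⊤)
    (γ : List {x // x ∈ S}) (β : HNNExtension H A B φ)
    (hβ : β = HNNExtension.t ∨ β = HNNExtension.t⁻¹) :
    2 / (S.card + 2 : ℝ≥0∞) ^ 2 ≤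
      ∑' y : {y : List {x // x ∈ S} //
          β * HNNExtension.of ((γ.map Subtype.val).prod * (y.map Subtype.val).prod) * β⁻¹ ∉
            hnnBase φ},
        2 / (S.card + 2 : ℝ≥0∞) ^ (y.val.length + 1) := by
  
  have hcond : ∃ y : List {x // x ∈ S}, y.length ≤ 1 ∧
      β * HNNExtension.of ((γ.map Subtype.val).prod * (y.map Subtype.val).prod) * β⁻¹ ∉
        hnnBase φ := by
    rcases hβ with rfl | rfl
    · obtain ⟨y, hy1, hy2⟩ := key_exists hgen hA (γ.map Subtype.val).prod
      exact ⟨y, hy1, britton_t φ hy2⟩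
    · obtain ⟨y, hy1, hy2⟩ := key_exists hgen hB (γ.map Subtype.val).prod
      refine ⟨y, hy1, ?_⟩
      rw [inv_inv]
      exact britton_tinv φ hy2
  obtain ⟨y, hy1, hy2⟩ := hcond
  calc 2 / (S.card + 2 : ℝ≥0∞) ^ 2
      ≤ 2 / (S.card + 2 : ℝ≥0∞) ^ (y.length + 1) := by
        gcongr
        · exact le_add_self.trans' one_le_two
        · omega
    _ ≤ _ := by
        have h := ENNReal.le_tsum (f := fun z : {y : List {x // x ∈ S} //
            β * HNNExtension.of ((γ.map Subtype.val).prod * (y.map Subtype.val).prod) * β⁻¹ ∉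
              hnnBase φ} =>
          2 / (S.card + 2 : ℝ≥0∞) ^ (z.val.length + 1)) ⟨y, hy2⟩
        exact h
end

section
/- Let d = d₁⋯d_{2n} be a Dyck word of length 2n and let k be the number of indices i with d_i d_{i+1} = ⌊⌉. Let β₁,…,β_{2n} be random elements of {b, b⁻¹} forming a Markov chain with β₁ uniform and transition probabilities Pr[β_{i+1} = β_i] = 2/3, Pr[β_{i+1} = β_i⁻¹] = 1/3. Then the probability of the event that (1) for every index i: d_i d_{i+1} = ⌊⌉ if and only if β_i β_{i+1} = b b⁻¹, and (2) for every matching pair (i,j) of d: β_j = β_i⁻¹, is at most (2/3)^{n−k}·(2/9)^k. -/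
/-- Number of opening brackets (`true` = `⌊`) among positions `l ≤ i < r` of `d`. -/
def cntT (d : ℕ → Bool) (l r : ℕ) : ℕ := ((Finset.Ico l r).filter fun i => d i = true).card

/-- Number of closing brackets (`false` = `⌉`) among positions `l ≤ i < r` of `d`. -/
def cntF (d : ℕ → Bool) (l r : ℕ) : ℕ := ((Finset.Ico l r).filter fun i => d i = false).card

/-- `d_l ⋯ d_{r-1}` is a Dyck word: equally many `⌊` and `⌉`, and every prefix has at
least as many `⌊` as `⌉`. -/
def IsDyckOn (d : ℕ → Bool) (l r : ℕ) : Prop :=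
  cntT d l r = cntF d l r ∧ ∀ m, l ≤ m → m ≤ r → cntF d l m ≤ cntT d l m

/-- `(i,j)` is a matching pair of the Dyck word `d₀ ⋯ d_{N-1}`:
`d_i = ⌊`, `d_j = ⌉` and `d_{i+1} ⋯ d_{j-1}` is a Dyck word. -/
def Matching (d : ℕ → Bool) (N i j : ℕ) : Prop :=
  i < j ∧ j < N ∧ d i = true ∧ d j = false ∧ IsDyckOn d (i + 1) j

open Finset

lemma cntT_split (d : ℕ → Bool) {l m r : ℕ} (h1 : l ≤ m) (h2 : m ≤ r) :
    cntT d l m + cntT d m r = cntT d l r := by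
  unfold cntT
  rw [← Finset.Ico_union_Ico_eq_Ico h1 h2, Finset.filter_union,
    Finset.card_union_of_disjoint]
  exact Finset.disjoint_filter_filter (Finset.Ico_disjoint_Ico_consecutive l m r)

lemma cntF_split (d : ℕ → Bool) {l m r : ℕ} (h1 : l ≤ m) (h2 : m ≤ r) :
    cntF d l m + cntF d m r = cntF d l r := by
  unfold cntF
  rw [← Finset.Ico_union_Ico_eq_Ico h1 h2, Finset.filter_union,
    Finset.card_union_of_disjoint]
  exact Finset.disjoint_filter_filter (Finset.Ico_disjoint_Ico_consecutive l m r)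

lemma cntT_succ (d : ℕ → Bool) {l m : ℕ} (h : l ≤ m) :
    cntT d l (m + 1) = cntT d l m + (if d m = true then 1 else 0) := by
  rw [← cntT_split d h (Nat.le_succ m)]
  congr 1
  unfold cntT
  rw [Nat.Ico_succ_singleton, Finset.filter_singleton]
  split <;> simp

lemma cntF_succ (d : ℕ → Bool) {l m : ℕ} (h : l ≤ m) :
    cntF d l (m + 1) = cntF d l m + (if d m = false then 1 else 0) := by
  rw [← cntF_split d h (Nat.le_succ m)]
  congr 1
  unfold cntF
  rw [Nat.Ico_succ_singleton, Finset.filter_singleton]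
  split <;> simp

lemma cntT_add_cntF (d : ℕ → Bool) (l r : ℕ) : cntT d l r + cntF d l r = r - l := by
  unfold cntT cntF
  have h2 : (Finset.Ico l r).filter (fun i => d i = false) =
      (Finset.Ico l r).filter (fun i => ¬ d i = true) := by
    apply Finset.filter_congr; intro x _; simp [Bool.not_eq_true]
  rw [h2, Finset.card_filter_add_card_filter_not (p := fun i => d i = true)]
  simp [Nat.card_Ico]

lemma opener_exists (d : ℕ → Bool) (N : ℕ) (hd : IsDyckOn d 0 N) {c : ℕ}
    (hc : c < N) (hdc : d c = false) : ∃ i, Matching d N i c := by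
  classical
  set H : ℕ → ℤ := fun m => (cntT d 0 m : ℤ) - (cntF d 0 m : ℤ) with hH
  have hH0 : H 0 = 0 := by simp [hH, cntT, cntF]
  have hstep : ∀ m, H (m + 1) = H m + (if d m = true then 1 else -1) := by
    intro m
    simp only [hH, cntT_succ d (Nat.zero_le m), cntF_succ d (Nat.zero_le m)]
    cases hm : d m <;> simp <;> push_cast <;> ring
  have hpre : ∀ m, m ≤ N → 0 ≤ H m := by
    intro m hm
    have := hd.2 m (Nat.zero_le m) hm
    simp only [hH, sub_nonneg]
    exact_mod_cast this
  have hHc1 : H (c + 1) = H c - 1 := by rw [hstep]; simp [hdc]; omega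
  have hHcpos : 1 ≤ H c := by
    have := hpre (c + 1) hc
    omega
  set P : ℕ → Prop := fun i => H i < H c with hP
  set i := Nat.findGreatest P c with hi
  have hPi : P i := Nat.findGreatest_spec (Nat.zero_le c) (by simp [hP, hH0]; omega)
  have hilec : i ≤ c := Nat.findGreatest_le c
  have hic : i < c := lt_of_le_of_ne hilec (by intro h; rw [h] at hPi; exact absurd hPi (lt_irrefl _))
  have hgreat : ∀ m, i < m → m ≤ c → H c ≤ H m := by
    intro m h1 h2
    by_contra hcon
    exact Nat.findGreatest_is_greatest h1 h2 (by push_neg at hcon; exact hcon)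
  have hdi : d i = true := by
    by_contra hdi
    have h1 : H (i + 1) = H i - 1 := by rw [hstep]; simp [hdi]; omega
    have := hgreat (i + 1) (Nat.lt_succ_self i) hic
    have : H i < H c := hPi
    omega
  have hHi1 : H (i + 1) = H c := by
    have h1 : H (i + 1) = H i + 1 := by rw [hstep]; simp [hdi]
    have h2 := hgreat (i + 1) (Nat.lt_succ_self i) hic
    have : H i < H c := hPi
    omega
  have key : ∀ m, i + 1 ≤ m → m ≤ c → (cntF d (i+1) m : ℤ) ≤ cntT d (i+1) m ∧
      ((cntT d (i+1) m : ℤ) - cntF d (i+1) m = H m - H (i+1)) := by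
    intro m h1 h2
    have hT := cntT_split d (Nat.zero_le (i+1)) h1
    have hF := cntF_split d (Nat.zero_le (i+1)) h1
    have hHm : H c ≤ H m := by
      rcases Nat.eq_or_lt_of_le h1 with h | h
      · rw [← h, hHi1]
      · exact hgreat m (by omega) h2
    have hdiff : (cntT d (i+1) m : ℤ) - cntF d (i+1) m = H m - H (i+1) := by
      simp only [hH]
      push_cast [← hT, ← hF]
      ring
    refine ⟨?_, hdiff⟩
    rw [hHi1] at hdiff
    omega
  refine ⟨i, hic, hc, hdi, hdc, ?_, ?_⟩
  · have := (key c (by omega) le_rfl).2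
    rw [hHi1] at this
    omega
  · intro m h1 h2
    have := (key m h1 h2).1
    exact_mod_cast this


def toF (s : Finset ℕ) : ℕ → Bool := fun i => decide (i ∈ s)

lemma core (W : ℕ → (ℕ → Bool) → ℝ) (b : ℕ → ℝ) (h : ℕ → (ℕ → Bool) → Bool)
    (Det : Finset ℕ)
    (hWloc : ∀ c (β β' : ℕ → Bool), (∀ x, x ≤ c → β x = β' x) → W c β = W c β')
    (hWpos : ∀ c β, 0 ≤ W c β)
    (hhloc : ∀ c (β β' : ℕ → Bool), (∀ x, x < c → β x = β' x) → h c β = h c β')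
    (hbpos : ∀ c, 0 ≤ b c)
    (hfree : ∀ c, c ∉ Det → ∀ β β' : ℕ → Bool, (∀ x, x < c → β x = β' x) →
      β c = true → β' c = false → W c β + W c β' ≤ 1)
    (hdet : ∀ c ∈ Det, ∀ β, β c = h c β → W c β ≤ b c) :
    ∀ m, ∑ s ∈ (range m).powerset,
        (if ∀ c ∈ Det, c < m → toF s c = h c (toF s) then ∏ c ∈ range m, W c (toF s) else 0)
      ≤ ∏ c ∈ Det.filter (· < m), b c := by
  classical
  intro m
  induction m with
  | zero =>
    have h1 : Det.filter (· < 0) = ∅ := by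
      apply Finset.filter_false_of_mem; intro x _; omega
    rw [h1]
    simp only [Finset.range_zero, Finset.powerset_empty, Finset.sum_singleton,
      Finset.prod_empty]
    split <;> norm_num
  | succ m ih =>
    rw [Finset.range_add_one, Finset.sum_powerset_insert (by simp)]
    have hBpos : 0 ≤ (if m ∈ Det then b m else 1) := by split; exacts [hbpos m, zero_le_one]
    -- pointwise bound
    have main : ∀ s ∈ (range m).powerset,
        (if ∀ c ∈ Det, c < m + 1 → toF s c = h c (toF s) then
            ∏ c ∈ insert m (range m), W c (toF s) else 0)
        + (if ∀ c ∈ Det, c < m + 1 → toF (insert m s) c = h c (toF (insert m s)) then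
            ∏ c ∈ insert m (range m), W c (toF (insert m s)) else 0)
        ≤ (if m ∈ Det then b m else 1) *
          (if ∀ c ∈ Det, c < m → toF s c = h c (toF s) then ∏ c ∈ range m, W c (toF s) else 0) := by
      intro s hs
      rw [Finset.mem_powerset] at hs
      have hms : m ∉ s := fun hm => absurd (hs hm) (by simp)
      set β := toF s with hβ
      set β' := toF (insert m s) with hβ'
      have hagree : ∀ x, x ≠ m → β x = β' x := by
        intro x hx
        simp only [hβ, hβ', toF, Finset.mem_insert]
        simp [hx]
      have hβm : β m = false := by simp [hβ, toF, hms]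
      have hβ'm : β' m = true := by simp [hβ', toF]
      -- products agree below m
      have hprodeq : ∏ c ∈ range m, W c β' = ∏ c ∈ range m, W c β := by
        apply Finset.prod_congr rfl
        intro c hc
        rw [Finset.mem_range] at hc
        exact hWloc c β' β (fun x hx => (hagree x (by omega)).symm)
      have hprodpos : 0 ≤ ∏ c ∈ range m, W c β := Finset.prod_nonneg (fun c _ => hWpos c β)
      have hheq : ∀ c, c < m + 1 → h c β = h c β' :=
        fun c hc => hhloc c β β' (fun x hx => hagree x (by omega))
      have hcondeq : (∀ c ∈ Det, c < m → β' c = h c β') ↔ (∀ c ∈ Det, c < m → β c = h c β) := by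
        constructor <;> intro hco c hc hcm
        · rw [hagree c (by omega), hheq c (by omega)]; exact hco c hc hcm
        · rw [← hagree c (by omega), ← hheq c (by omega)]; exact hco c hc hcm
      have hsplit : ∀ γ : ℕ → Bool, (∀ c ∈ Det, c < m + 1 → γ c = h c γ) ↔
          ((∀ c ∈ Det, c < m → γ c = h c γ) ∧ (m ∈ Det → γ m = h m γ)) := by
        intro γ
        constructor
        · intro hco
          exact ⟨fun c hc hcm => hco c hc (by omega), fun hm => hco m hm (by omega)⟩
        · rintro ⟨h1, h2⟩ c hc hcm
          rcases Nat.lt_or_ge c m with h | h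
          · exact h1 c hc h
          · have : c = m := by omega
            subst this; exact h2 hc
      rw [Finset.prod_insert (by simp), Finset.prod_insert (by simp), hprodeq]
      by_cases hcond : ∀ c ∈ Det, c < m → β c = h c β
      · rw [if_pos hcond]
        by_cases hmDet : m ∈ Det
        · rw [if_pos hmDet]
          cases hx : h m β with
          | true =>
            rw [if_neg, if_pos]
            · have hW : W m β' ≤ b m := by
                apply hdet m hmDet
                rw [hβ'm, ← hheq m (by omega), hx]
              nlinarith [hWpos m β']
            · rw [hsplit]
              exact ⟨hcondeq.mpr hcond, fun _ => by rw [hβ'm, ← hheq m (by omega), hx]⟩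
            · rw [hsplit]
              intro ⟨_, h2⟩
              rw [hβm, hx] at h2
              exact absurd (h2 hmDet) (by simp)
          | false =>
            rw [if_pos, if_neg]
            · have hW : W m β ≤ b m := hdet m hmDet β (by rw [hβm, hx])
              nlinarith [hWpos m β]
            · rw [hsplit]
              intro ⟨_, h2⟩
              rw [hβ'm, ← hheq m (by omega), hx] at h2
              exact absurd (h2 hmDet) (by simp)
            · rw [hsplit]
              exact ⟨hcond, fun _ => by rw [hβm, hx]⟩
        · rw [if_neg hmDet, one_mul, if_pos, if_pos]
          · rw [mul_comm (W m β) _, mul_comm (W m β') _, ← mul_add]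
            have : W m β + W m β' ≤ 1 := by
              rw [add_comm]
              exact hfree m hmDet β' β (fun x hx => (hagree x (by omega)).symm) hβ'm hβm
            calc (∏ c ∈ range m, W c β) * (W m β + W m β')
                ≤ (∏ c ∈ range m, W c β) * 1 := mul_le_mul_of_nonneg_left this hprodpos
              _ = _ := mul_one _
          · rw [hsplit]; exact ⟨hcondeq.mpr hcond, fun hm => absurd hm hmDet⟩
          · rw [hsplit]; exact ⟨hcond, fun hm => absurd hm hmDet⟩
      · rw [if_neg hcond, mul_zero, if_neg, if_neg]
        · norm_num
        · rw [hsplit]; intro ⟨h1, _⟩; exact hcond (hcondeq.mp h1)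
        · rw [hsplit]; intro ⟨h1, _⟩; exact hcond h1
    calc _ ≤ ∑ s ∈ (range m).powerset, (if m ∈ Det then b m else 1) *
          (if ∀ c ∈ Det, c < m → toF s c = h c (toF s) then ∏ c ∈ range m, W c (toF s) else 0) := by
          rw [← Finset.sum_add_distrib]
          exact Finset.sum_le_sum main
      _ = (if m ∈ Det then b m else 1) * ∑ s ∈ (range m).powerset,
          (if ∀ c ∈ Det, c < m → toF s c = h c (toF s) then ∏ c ∈ range m, W c (toF s) else 0) := by
          rw [Finset.mul_sum]
      _ ≤ (if m ∈ Det then b m else 1) * ∏ c ∈ Det.filter (· < m), b c :=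
          mul_le_mul_of_nonneg_left ih hBpos
      _ = ∏ c ∈ Det.filter (· < m + 1), b c := by
          by_cases hmDet : m ∈ Det
          · rw [if_pos hmDet]
            have : Det.filter (· < m + 1) = insert m (Det.filter (· < m)) := by
              ext x
              simp only [Finset.mem_filter, Finset.mem_insert]
              constructor
              · rintro ⟨h1, h2⟩
                rcases Nat.lt_or_ge x m with h | h
                · exact Or.inr ⟨h1, h⟩
                · exact Or.inl (by omega)
              · rintro (rfl | ⟨h1, h2⟩)
                · exact ⟨hmDet, by omega⟩
                · exact ⟨h1, by omega⟩
            rw [this, Finset.prod_insert (by simp)]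
          · rw [if_neg hmDet, one_mul]
            congr 1
            ext y
            simp only [Finset.mem_filter]
            constructor
            · rintro ⟨h1, h2⟩
              refine ⟨h1, ?_⟩
              have : y ≠ m := fun h => hmDet (h ▸ h1)
              omega
            · rintro ⟨h1, h2⟩
              refine ⟨h1, ?_⟩
              have hy : y ≠ m := fun h => hmDet (h ▸ h1)
              omega

noncomputable section
open Classical

def wW (c : ℕ) (β : ℕ → Bool) : ℝ :=
  if c = 0 then 2⁻¹ else if β c = β (c - 1) then 2 / 3 else 1 / 3

def opener (d : ℕ → Bool) (N c : ℕ) : ℕ :=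
  if hc : ∃ i, Matching d N i c then hc.choose else 0

def hFun (d : ℕ → Bool) (N c : ℕ) (β : ℕ → Bool) : Bool :=
  if c = 0 ∨ d c = true then true
  else if d (c - 1) = true then !β (c - 1) else !β (opener d N c)

def bB (d : ℕ → Bool) (c : ℕ) : ℝ :=
  if d c = true then 2 / 3 else if d (c - 1) = true then 1 / 3 else 2 / 3

def DetS (d : ℕ → Bool) (N : ℕ) : Finset ℕ :=
  (Finset.range N).filter fun c => d c = false ∨ (c + 1 < N ∧ d c = true ∧ d (c + 1) = false)

lemma opener_lt (d : ℕ → Bool) (N c : ℕ) (h : ∃ i, Matching d N i c) :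
    opener d N c < c := by
  rw [opener, dif_pos h]
  exact h.choose_spec.1

lemma opener_matching (d : ℕ → Bool) (N c : ℕ) (h : ∃ i, Matching d N i c) :
    Matching d N (opener d N c) c := by
  rw [opener, dif_pos h]
  exact h.choose_spec

lemma hWloc : ∀ c (β β' : ℕ → Bool), (∀ x, x ≤ c → β x = β' x) → wW c β = wW c β' := by
  intro c β β' hag
  rcases Nat.eq_zero_or_pos c with rfl | hc
  · simp [wW]
  · have e1 : wW c β = if β c = β (c - 1) then 2 / 3 else 1 / 3 := by
      rw [wW, if_neg (by omega)]
    have e2 : wW c β' = if β' c = β' (c - 1) then 2 / 3 else 1 / 3 := by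
      rw [wW, if_neg (by omega)]
    rw [e1, e2, hag c le_rfl, hag (c - 1) (by omega)]

lemma hWpos : ∀ c β, 0 ≤ wW c β := by
  intro c β
  unfold wW
  split
  · norm_num
  · split <;> norm_num

lemma hhloc (d : ℕ → Bool) (N : ℕ) :
    ∀ c (β β' : ℕ → Bool), (∀ x, x < c → β x = β' x) → hFun d N c β = hFun d N c β' := by
  intro c β β' hag
  unfold hFun
  by_cases hcd : c = 0 ∨ d c = true
  · rw [if_pos hcd, if_pos hcd]
  · have hc : 0 < c := by
      by_contra h
      exact hcd (Or.inl (by omega))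
    rw [if_neg hcd, if_neg hcd]
    by_cases hd1 : d (c - 1) = true
    · rw [if_pos hd1, if_pos hd1, hag (c - 1) (by omega)]
    · rw [if_neg hd1, if_neg hd1]
      by_cases hex : ∃ i, Matching d N i c
      · rw [hag _ (opener_lt d N c hex)]
      · rw [opener, dif_neg hex, hag 0 hc]

lemma hbpos (d : ℕ → Bool) : ∀ c, 0 ≤ bB d c := by
  intro c
  unfold bB
  split
  · norm_num
  · split <;> norm_num

lemma hfree (d : ℕ → Bool) (N : ℕ) :
    ∀ c, c ∉ DetS d N → ∀ β β' : ℕ → Bool, (∀ x, x < c → β x = β' x) →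
      β c = true → β' c = false → wW c β + wW c β' ≤ 1 := by
  intro c _ β β' hag hβ hβ'
  rcases Nat.eq_zero_or_pos c with rfl | hc
  · simp [wW]; norm_num
  · have e1 : wW c β = if β c = β (c - 1) then 2 / 3 else 1 / 3 := by
      rw [wW, if_neg (by omega)]
    have e2 : wW c β' = if β' c = β' (c - 1) then 2 / 3 else 1 / 3 := by
      rw [wW, if_neg (by omega)]
    rw [e1, e2, hβ, hβ', ← hag (c - 1) (by omega)]
    cases β (c - 1) <;> norm_num

lemma hdet (d : ℕ → Bool) (N : ℕ) :
    ∀ c ∈ DetS d N, ∀ β, β c = hFun d N c β → wW c β ≤ bB d c := by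
  intro c _ β hβ
  rcases Nat.eq_zero_or_pos c with rfl | hc
  · have e1 : wW 0 β = 2⁻¹ := by rw [wW, if_pos rfl]
    rw [e1, bB]
    split_ifs <;> norm_num
  · have e1 : wW c β = if β c = β (c - 1) then 2 / 3 else 1 / 3 := by
      rw [wW, if_neg (by omega)]
    rw [e1, bB]
    by_cases hdc : d c = true
    · rw [if_pos hdc]
      split_ifs <;> norm_num
    · rw [if_neg hdc]
      by_cases hdc1 : d (c - 1) = true
      · rw [if_pos hdc1]
        have hh : hFun d N c β = !β (c - 1) := by
          rw [hFun, if_neg, if_pos hdc1]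
          rintro (h | h)
          · omega
          · exact hdc h
        have hne : β c ≠ β (c - 1) := by
          rw [hβ, hh]
          cases β (c - 1) <;> simp
        rw [if_neg hne]
      · rw [if_neg hdc1]
        split_ifs <;> norm_num
end


noncomputable section
open Classical

def enc (M : ℕ) (β : Fin M → Bool) : Finset ℕ :=
  (Finset.univ.filter fun j : Fin M => β j = true).image Fin.val

lemma enc_mem (M : ℕ) (β : Fin M → Bool) (j : Fin M) : (j : ℕ) ∈ enc M β ↔ β j = true := by
  constructor
  · intro h
    rw [enc, Finset.mem_image] at h
    obtain ⟨a, ha, hav⟩ := h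
    rw [Finset.mem_filter] at ha
    exact (Fin.val_injective hav) ▸ ha.2
  · intro h
    rw [enc, Finset.mem_image]
    exact ⟨j, Finset.mem_filter.mpr ⟨Finset.mem_univ j, h⟩, rfl⟩

lemma enc_spec (M : ℕ) (β : Fin M → Bool) (j : Fin M) : toF (enc M β) (j : ℕ) = β j := by
  rw [toF]
  cases hb : β j with
  | true => exact decide_eq_true ((enc_mem M β j).mpr hb)
  | false =>
    rw [decide_eq_false_iff_not]
    intro h
    rw [(enc_mem M β j).mp h] at hb
    exact Bool.noConfusion hb

lemma enc_subset (M : ℕ) (β : Fin M → Bool) : enc M β ⊆ Finset.range M := by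
  intro x hx
  rw [enc, Finset.mem_image] at hx
  obtain ⟨a, _, rfl⟩ := hx
  rw [Finset.mem_range]
  exact a.2

lemma enc_inj (M : ℕ) (β β' : Fin M → Bool) (h : enc M β = enc M β') : β = β' := by
  funext j
  rw [← enc_spec M β j, ← enc_spec M β' j, h]

lemma Vcond (n : ℕ) (d : ℕ → Bool) (hd : IsDyckOn d 0 (2 * n)) (β : Fin (2 * n) → Bool)
    (h1 : ∀ i : ℕ, (h : i + 1 < 2 * n) →
      ((d i = true ∧ d (i + 1) = false) ↔
        (β ⟨i, Nat.lt_of_succ_lt h⟩ = true ∧ β ⟨i + 1, h⟩ = false)))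
    (h2 : ∀ i j : ℕ, (hm : Matching d (2 * n) i j) →
      β ⟨j, hm.2.1⟩ = ! β ⟨i, lt_trans hm.1 hm.2.1⟩) :
    ∀ c ∈ DetS d (2 * n), c < 2 * n →
      toF (enc (2 * n) β) c = hFun d (2 * n) c (toF (enc (2 * n) β)) := by
  set γ := toF (enc (2 * n) β) with hγdef
  have hγ : ∀ (x : ℕ) (hx : x < 2 * n), γ x = β ⟨x, hx⟩ := by
    intro x hx
    exact enc_spec (2 * n) β ⟨x, hx⟩
  intro c hcDet hc2n
  rw [DetS, Finset.mem_filter] at hcDet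
  rcases hcDet.2 with hdc | ⟨hlt, hdc, hdc1⟩
  · -- closing bracket
    obtain ⟨i0, hM0⟩ := opener_exists d (2 * n) hd hc2n hdc
    have hc1 : 0 < c := by have := hM0.1; omega
    rw [hFun, if_neg (by
      rintro (h | h)
      · omega
      · rw [h] at hdc; exact Bool.noConfusion hdc)]
    by_cases hd1 : d (c - 1) = true
    · rw [if_pos hd1]
      have ec : c - 1 + 1 = c := by omega
      have hMM : Matching d (2 * n) (c - 1) c := by
        refine ⟨by omega, hc2n, hd1, hdc, ?_⟩
        rw [ec]
        constructor
        · simp [cntT, cntF]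
        · intro m hm1 hm2
          have : m = c := by omega
          subst this
          simp [cntT, cntF]
      have := h2 (c - 1) c hMM
      rw [hγ c hc2n, hγ (c - 1) (by omega)]
      exact this
    · rw [if_neg hd1]
      have hex : ∃ i, Matching d (2 * n) i c := ⟨i0, hM0⟩
      have hMo := opener_matching d (2 * n) c hex
      have := h2 _ _ hMo
      rw [hγ c hc2n, hγ (opener d (2 * n) c) (lt_trans (opener_lt d (2 * n) c hex) hc2n)]
      exact this
  · -- factor opening
    rw [hFun, if_pos (Or.inr hdc), hγ c hc2n]
    exact ((h1 c hlt).mp ⟨hdc, hdc1⟩).1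

lemma summand_le (M : ℕ) (β : Fin M → Bool) :
    2⁻¹ * ∏ i : Fin M, (if h : (i : ℕ) + 1 < M then
        (if β ⟨(i : ℕ) + 1, h⟩ = β i then (2 : ℝ) / 3 else 1 / 3) else 1)
    ≤ ∏ c ∈ Finset.range M, wW c (toF (enc M β)) := by
  set γ := toF (enc M β) with hγdef
  have hγ : ∀ (x : ℕ) (hx : x < M), γ x = β ⟨x, hx⟩ := by
    intro x hx
    exact enc_spec M β ⟨x, hx⟩
  set f' : ℕ → ℝ := fun i => if i + 1 < M then (if γ (i + 1) = γ i then (2:ℝ) / 3 else 1 / 3) else 1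
    with hf'
  have hprod1 : ∏ i : Fin M, (if h : (i : ℕ) + 1 < M then
      (if β ⟨(i : ℕ) + 1, h⟩ = β i then (2 : ℝ) / 3 else 1 / 3) else 1) = ∏ i ∈ Finset.range M, f' i := by
    rw [← Fin.prod_univ_eq_prod_range]
    apply Finset.prod_congr rfl
    intro i _
    by_cases h : (i : ℕ) + 1 < M
    · rw [dif_pos h]
      have e1 : γ ((i : ℕ) + 1) = β ⟨(i : ℕ) + 1, h⟩ := hγ _ h
      have e2 : γ (i : ℕ) = β i := hγ _ i.2
      rw [hf']
      simp only []
      rw [if_pos h, e1, e2]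
    · rw [dif_neg h, hf']
      simp only []
      rw [if_neg h]
  rw [hprod1]
  cases M with
  | zero =>
    simp only [Finset.range_zero, Finset.prod_empty]
    norm_num
  | succ m =>
    rw [Finset.prod_range_succ' (fun c => wW c γ) m, Finset.prod_range_succ]
    have hfM : f' m = 1 := by rw [hf']; simp only []; rw [if_neg (by omega)]
    have hw0 : wW 0 γ = 2⁻¹ := by rw [wW, if_pos rfl]
    rw [hfM, hw0, mul_one, mul_comm]
    apply le_of_eq
    congr 1
    apply Finset.prod_congr rfl
    intro i hi
    rw [Finset.mem_range] at hi
    rw [hf']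
    simp only []
    rw [if_pos (by omega), wW, if_neg (Nat.succ_ne_zero i), Nat.add_sub_cancel]

lemma prod_bB (n k : ℕ) (d : ℕ → Bool) (hd : IsDyckOn d 0 (2 * n))
    (hk : k = ((Finset.range (2 * n)).filter fun i =>
        i + 1 < 2 * n ∧ d i = true ∧ d (i + 1) = false).card) :
    ∏ c ∈ DetS d (2 * n), bB d c = (2 / 3 : ℝ) ^ (n - k) * (2 / 9 : ℝ) ^ k := by
  classical
  set O : Finset ℕ := (Finset.range (2 * n)).filter
    (fun c => c + 1 < 2 * n ∧ d c = true ∧ d (c + 1) = false) with hO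
  set C : Finset ℕ := (Finset.range (2 * n)).filter (fun c => d c = false) with hC
  have hsplit : DetS d (2 * n) = C ∪ O := by
    rw [DetS, Finset.filter_or]
  have hdisj : Disjoint C O := by
    rw [Finset.disjoint_left]
    intro a haC haO
    rw [hC, Finset.mem_filter] at haC
    rw [hO, Finset.mem_filter] at haO
    rw [haO.2.2.1] at haC
    exact Bool.noConfusion haC.2
  have hcardO : O.card = k := hk.symm
  have hcardC : C.card = n := by
    have h1 : cntF d 0 (2 * n) = C.card := by
      rw [cntF, hC, ← Finset.range_eq_Ico]
    have h2 := cntT_add_cntF d 0 (2 * n)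
    have h3 := hd.1
    omega
  set C1 : Finset ℕ := C.filter (fun c => d (c - 1) = true) with hC1
  set C2 : Finset ℕ := C.filter (fun c => ¬ d (c - 1) = true) with hC2
  have hC1pos : ∀ c ∈ C1, 0 < c := by
    intro c hc
    rw [hC1, Finset.mem_filter, hC, Finset.mem_filter] at hc
    rcases Nat.eq_zero_or_pos c with rfl | h
    · exfalso
      have h1 : d 0 = false := hc.1.2
      have h2 : d (0 - 1) = true := hc.2
      rw [Nat.zero_sub] at h2
      rw [h1] at h2
      exact Bool.noConfusion h2
    · exact h
  have hcardC1 : C1.card = k := by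
    have himg : C1 = O.image (fun i => i + 1) := by
      ext c
      simp only [hC1, hC, hO, Finset.mem_image, Finset.mem_filter, Finset.mem_range]
      constructor
      · rintro ⟨⟨hcn, hcf⟩, hct⟩
        have hcpos : 0 < c := by
          rcases Nat.eq_zero_or_pos c with rfl | h
          · rw [Nat.zero_sub] at hct
            rw [hct] at hcf
            exact Bool.noConfusion hcf
          · exact h
        have e : c - 1 + 1 = c := by omega
        exact ⟨c - 1, ⟨by omega, by omega, hct, by rw [e]; exact hcf⟩, e⟩
      · rintro ⟨i, ⟨⟨hin, hit, hif⟩, rfl⟩⟩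
        refine ⟨⟨hit, hif.2⟩, ?_⟩
        rw [Nat.add_sub_cancel]
        exact hif.1
    rw [himg, Finset.card_image_of_injective _ (fun a b h => by omega)]
    exact hcardO
  have hcardC2 : C2.card = n - k := by
    have := Finset.card_filter_add_card_filter_not (s := C)
      (p := fun c => d (c - 1) = true)
    rw [← hC1, ← hC2] at this
    omega
  have hkn : k ≤ n := by
    have h1 : C1.card + C2.card = C.card := by
      have := Finset.card_filter_add_card_filter_not (s := C)
        (p := fun c => d (c - 1) = true)
      rw [← hC1, ← hC2] at this
      omega
    omega
  have hprodO : ∏ c ∈ O, bB d c = (2 / 3 : ℝ) ^ k := by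
    rw [Finset.prod_congr rfl (g := fun _ => (2/3 : ℝ)) (fun c hc => by
      rw [hO, Finset.mem_filter] at hc
      rw [bB, if_pos hc.2.2.1]), Finset.prod_const, hcardO]
  have hprodC : ∏ c ∈ C, bB d c = (1 / 3 : ℝ) ^ k * (2 / 3 : ℝ) ^ (n - k) := by
    rw [← Finset.prod_filter_mul_prod_filter_not C (fun c => d (c - 1) = true)]
    rw [← hC1, ← hC2]
    have e1 : ∏ c ∈ C1, bB d c = (1 / 3 : ℝ) ^ k := by
      rw [Finset.prod_congr rfl (g := fun _ => (1/3 : ℝ)) (fun c hc => by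
        rw [hC1, Finset.mem_filter, hC, Finset.mem_filter] at hc
        rw [bB, if_neg (by rw [hc.1.2]; exact Bool.noConfusion), if_pos hc.2]),
        Finset.prod_const, hcardC1]
    have e2 : ∏ c ∈ C2, bB d c = (2 / 3 : ℝ) ^ (n - k) := by
      rw [Finset.prod_congr rfl (g := fun _ => (2/3 : ℝ)) (fun c hc => by
        rw [hC2, Finset.mem_filter, hC, Finset.mem_filter] at hc
        rw [bB, if_neg (by rw [hc.1.2]; exact Bool.noConfusion), if_neg hc.2]),
        Finset.prod_const, hcardC2]
    rw [e1, e2]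
  rw [hsplit, Finset.prod_union hdisj, hprodC, hprodO]
  have e9 : (2 / 9 : ℝ) ^ k = (2 / 3 : ℝ) ^ k * (1 / 3 : ℝ) ^ k := by
    rw [← mul_pow]; norm_num
  rw [e9]
  ring
end

lemma ite_irrel {c : Prop} (h1 h2 : Decidable c) (a b : ℝ) :
    @ite _ c h1 a b = @ite _ c h2 a b := by
  cases Subsingleton.elim h1 h2
  rfl


/-- For a Dyck word `d` of length `2n` with `k` factors `⌊⌉`, the probability (under the
Markov chain on `{b, b⁻¹}`, `true` = `b`, with uniform start and staying probability `2/3`)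
that (1) `d_i d_{i+1} = ⌊⌉` iff `β_i β_{i+1} = b b⁻¹`, and (2) `β_j = β_i⁻¹` for every
matching pair `(i,j)` of `d`, is at most `(2/3)^{n-k}·(2/9)^k`. -/
theorem stmt17 (n k : ℕ) (d : ℕ → Bool) (hd : IsDyckOn d 0 (2 * n))
    (hk : k = ((Finset.range (2 * n)).filter fun i =>
        i + 1 < 2 * n ∧ d i = true ∧ d (i + 1) = false).card) :
    ∑' β : {β : Fin (2 * n) → Bool //
        (∀ i : ℕ, (h : i + 1 < 2 * n) →
          ((d i = true ∧ d (i + 1) = false) ↔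
            (β ⟨i, Nat.lt_of_succ_lt h⟩ = true ∧ β ⟨i + 1, h⟩ = false))) ∧
        (∀ i j : ℕ, (hm : Matching d (2 * n) i j) →
          β ⟨j, hm.2.1⟩ = ! β ⟨i, lt_trans hm.1 hm.2.1⟩)},
      (2⁻¹ * ∏ i : Fin (2 * n), if h : (i : ℕ) + 1 < 2 * n then
          (if β.val ⟨(i : ℕ) + 1, h⟩ = β.val i then (2 : ℝ) / 3 else 1 / 3) else 1)
      ≤ (2 / 3 : ℝ) ^ (n - k) * (2 / 9 : ℝ) ^ k := by
  classical
  have hfilter : (DetS d (2 * n)).filter (· < 2 * n) = DetS d (2 * n) := by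
    apply Finset.filter_true_of_mem
    intro c hc
    rw [DetS, Finset.mem_filter, Finset.mem_range] at hc
    exact hc.1
  have key := core wW (bB d) (hFun d (2 * n)) (DetS d (2 * n)) hWloc hWpos (hhloc d (2 * n))
    (hbpos d) (hfree d (2 * n)) (hdet d (2 * n)) (2 * n)
  rw [hfilter] at key
  have hprodb := prod_bB n k d hd hk
  rw [tsum_fintype]
  set F : Finset ℕ → ℝ := fun s =>
    if ∀ c ∈ DetS d (2 * n), c < 2 * n → toF s c = hFun d (2 * n) c (toF s) then
      ∏ c ∈ Finset.range (2 * n), wW c (toF s) else 0 with hF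
  calc ∑ x : {β : Fin (2 * n) → Bool //
        (∀ i : ℕ, (h : i + 1 < 2 * n) →
          ((d i = true ∧ d (i + 1) = false) ↔
            (β ⟨i, Nat.lt_of_succ_lt h⟩ = true ∧ β ⟨i + 1, h⟩ = false))) ∧
        (∀ i j : ℕ, (hm : Matching d (2 * n) i j) →
          β ⟨j, hm.2.1⟩ = ! β ⟨i, lt_trans hm.1 hm.2.1⟩)},
      (2⁻¹ * ∏ i : Fin (2 * n), if h : (i : ℕ) + 1 < 2 * n then
          (if x.val ⟨(i : ℕ) + 1, h⟩ = x.val i then (2 : ℝ) / 3 else 1 / 3) else 1)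
      ≤ ∑ x : {β : Fin (2 * n) → Bool //
        (∀ i : ℕ, (h : i + 1 < 2 * n) →
          ((d i = true ∧ d (i + 1) = false) ↔
            (β ⟨i, Nat.lt_of_succ_lt h⟩ = true ∧ β ⟨i + 1, h⟩ = false))) ∧
        (∀ i j : ℕ, (hm : Matching d (2 * n) i j) →
          β ⟨j, hm.2.1⟩ = ! β ⟨i, lt_trans hm.1 hm.2.1⟩)}, F (enc (2 * n) x.val) := by
        apply Finset.sum_le_sum
        intro x _
        have hcond := Vcond n d hd x.val x.2.1 x.2.2
        rw [hF]
        simp only []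
        rw [if_pos hcond]
        exact summand_le (2 * n) x.val
    _ = ∑ s ∈ Finset.univ.image (fun x : {β : Fin (2 * n) → Bool //
        (∀ i : ℕ, (h : i + 1 < 2 * n) →
          ((d i = true ∧ d (i + 1) = false) ↔
            (β ⟨i, Nat.lt_of_succ_lt h⟩ = true ∧ β ⟨i + 1, h⟩ = false))) ∧
        (∀ i j : ℕ, (hm : Matching d (2 * n) i j) →
          β ⟨j, hm.2.1⟩ = ! β ⟨i, lt_trans hm.1 hm.2.1⟩)} => enc (2 * n) x.val), F s := by
        rw [Finset.sum_image]
        intro x _ y _ hxy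
        exact Subtype.ext (enc_inj _ _ _ hxy)
    _ ≤ ∑ s ∈ (Finset.range (2 * n)).powerset, F s := by
        apply Finset.sum_le_sum_of_subset_of_nonneg
        · intro s hs
          rw [Finset.mem_image] at hs
          obtain ⟨x, _, rfl⟩ := hs
          exact Finset.mem_powerset.mpr (enc_subset _ _)
        · intro s _ _
          rw [hF]
          simp only []
          split
          · exact Finset.prod_nonneg (fun c _ => hWpos c _)
          · exact le_refl 0
    _ ≤ ∏ c ∈ DetS d (2 * n), bB d c := by
        refine le_trans (le_of_eq ?_) key
        apply Finset.sum_congr rfl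
        intro s _
        rw [hF]
        exact ite_irrel _ _ _ _
    _ = (2 / 3 : ℝ) ^ (n - k) * (2 / 9 : ℝ) ^ k := hprodb
end
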